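/- Let Q be a smooth manifold, ϑ a closed one-form on Q, and W¹,…,W^k smooth functions on Q. Define the one-forms d_ϑW^κ := dW^κ − W^κϑ and the section γ = (d_ϑW¹,…,d_ϑW^k) of the bundle T_{k,θ}*Q → Q. Then d_ϑ(d_ϑW^κ) = 0 for every κ, and hence the image im(d_ϑW¹) ⊕_Q … ⊕_Q im(d_ϑW^k) of γ is a Lagrangian submanifold of the locally conformal k-symplectic manifold (T_{k,θ}*Q, [Ω_θ^κ], θ, V). -/

import Mathlib

noncomputable section

open scoped BigOperators

variable {E F : Type*} [NormedAddCommGroup E] [NormedSpace ℝ E]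
  [NormedAddCommGroup F] [NormedSpace ℝ F]

/-- The exterior derivative of a smooth function, as a one-form. -/
def extDer0 (f : E → ℝ) : E → E → ℝ := fun x v => fderiv ℝ f x v

/-- The exterior derivative of a one-form. -/
def extDer1 (α : E → E → ℝ) : E → E → E → ℝ := fun x u v =>
  fderiv ℝ (fun y => α y v) x u - fderiv ℝ (fun y => α y u) x v

/-- The exterior derivative of a two-form. -/
def extDer2 (ω : E → E → E → ℝ) : E → E → E → E → ℝ := fun x u v w =>
  fderiv ℝ (fun y => ω y v w) x u - fderiv ℝ (fun y => ω y u w) x v +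
    fderiv ℝ (fun y => ω y u v) x w

/-- Wedge product of two one-forms. -/
def wedge11 (α β : E → E → ℝ) : E → E → E → ℝ := fun x u v =>
  α x u * β x v - α x v * β x u

/-- Wedge product of a one-form with a two-form. -/
def wedge12 (θ : E → E → ℝ) (ω : E → E → E → ℝ) : E → E → E → E → ℝ := fun x u v w =>
  θ x u * ω x v w - θ x v * ω x u w + θ x w * ω x u v

/-- Pullback of a one-form along a smooth map. -/
def pb1 (φ : E → F) (α : F → F → ℝ) : E → E → ℝ := fun x v => α (φ x) (fderiv ℝ φ x v)

/-- Pullback of a two-form along a smooth map. -/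
def pb2 (φ : E → F) (ω : F → F → F → ℝ) : E → E → E → ℝ := fun x u v =>
  ω (φ x) (fderiv ℝ φ x u) (fderiv ℝ φ x v)

/-- Model for the cotangent bundle `T*Q` of the manifold `Q = E`. -/
abbrev Cot (E : Type*) [NormedAddCommGroup E] [NormedSpace ℝ E] := E × (E →L[ℝ] ℝ)

/-- The tautological (canonical) one-form `Θ_Q` on `T*Q`. -/
def taut : Cot E → Cot E → ℝ := fun z v => z.2 v.1

/-- The canonical symplectic two-form `Ω_Q = -dΘ_Q` on `T*Q`. -/
def canSymp : Cot E → Cot E → Cot E → ℝ := fun z u v => -(extDer1 taut z u v)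
/-- The almost symplectic two-form `Ω_θ = -dΘ_Q + (π_Q*ϑ) ∧ Θ_Q` on `T*Q`,
for the Lee form `θ = π_Q*ϑ`. -/
def lcsForm (ϑ : E → E →L[ℝ] ℝ) : Cot E → Cot E → Cot E → ℝ := fun z u v =>
  canSymp z u v + (ϑ z.1 u.1 * taut z v - ϑ z.1 v.1 * taut z u)
/-- Model for the `k`-cotangent bundle `T_k*Q = T*Q ⊕_Q ⋯ ⊕_Q T*Q` of `Q = E`. -/
abbrev kCot (E : Type*) [NormedAddCommGroup E] [NormedSpace ℝ E] (k : ℕ) :=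
  E × (Fin k → E →L[ℝ] ℝ)

/-- The projection `π^κ : T_k*Q → T*Q` onto the `κ`-th summand. -/
def kproj {k : ℕ} (κ : Fin k) : kCot E k → Cot E := fun z => (z.1, z.2 κ)

/-- The canonical two-forms `Ω^κ = (π^κ)*Ω_Q` on `T_k*Q`
(`π^κ` is linear, so its pullback is plain composition). -/
def kForm {k : ℕ} (κ : Fin k) : kCot E k → kCot E k → kCot E k → ℝ :=
  fun z u v => canSymp (kproj κ z) (kproj κ u) (kproj κ v)
/-- The two-forms `Ω_θ^κ = (π^κ)*Ω_θ` of the locally conformal `k`-symplectic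
structure on `T_{k,θ}*Q`. -/
def lcksForm (ϑ : E → E →L[ℝ] ℝ) {k : ℕ} (κ : Fin k) :
    kCot E k → kCot E k → kCot E k → ℝ :=
  fun z u v => lcsForm ϑ (kproj κ z) (kproj κ u) (kproj κ v)
/-- The `k`-symplectic orthogonal of a set `S` of tangent vectors at `z`, with respect
to a family of two-forms `Ω^κ`. -/
def kPerp {k : ℕ} (Ω : Fin k → kCot E k → kCot E k → kCot E k → ℝ) (z : kCot E k)
    (S : Set (kCot E k)) : Set (kCot E k) :=
  {v | ∀ w ∈ S, ∀ κ, Ω κ z v w = 0}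

/-- Auxiliary: derivative of the evaluation of a one-form at a fixed vector. -/
lemma fderiv_apply_const_aux {G : Type*} [NormedAddCommGroup G] [NormedSpace ℝ G]
    {c : G → E →L[ℝ] ℝ} {x : G} (hc : DifferentiableAt ℝ c x)
    (v : E) (u : G) : fderiv ℝ (fun y => c y v) x u = fderiv ℝ c x u v := by
  have h : HasFDerivAt (fun y => c y v) ((fderiv ℝ c x).flip v) x := by
    have := hc.hasFDerivAt.clm_apply (hasFDerivAt_const v x)
    simpa using this
  rw [h.fderiv]
  rfl

/-- Auxiliary: the exterior derivative of the tautological one-form. -/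
lemma taut_extDer1 (z u v : Cot E) : extDer1 (taut (E := E)) z u v = u.2 v.1 - v.2 u.1 := by
  have key : ∀ w d : Cot E, fderiv ℝ (fun y : Cot E => taut y w) z d = d.2 w.1 := by
    intro w d
    have hM : (fun y : Cot E => taut y w)
        = ⇑((ContinuousLinearMap.apply ℝ ℝ w.1).comp
            (ContinuousLinearMap.snd ℝ E (E →L[ℝ] ℝ))) := rfl
    rw [hM, ContinuousLinearMap.fderiv]
    rfl
  simp [extDer1, key]

/-- For a closed one-form `ϑ` on `Q = E` and smooth functions
`W^1,…,W^k` on `Q`, the one-forms `γ^κ = d_ϑW^κ = dW^κ - W^κ ϑ` satisfy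
`d_ϑ(d_ϑW^κ) = 0` for all `κ`, and hence the image of the section
`γ = (d_ϑW^1,…,d_ϑW^k)` of `T_{k,θ}*Q → Q` is a Lagrangian submanifold of the
locally conformal `k`-symplectic manifold `(T_{k,θ}*Q, [Ω_θ^κ], θ, V)`. -/
theorem dW_section_lagrangian
    [FiniteDimensional ℝ E] {k : ℕ}
    (ϑ : E → E →L[ℝ] ℝ) (hϑs : ContDiff ℝ (⊤ : ℕ∞) ϑ)
    (hϑc : ∀ x u v, extDer1 (fun y w => ϑ y w) x u v = 0)
    (W : Fin k → E → ℝ) (hW : ∀ κ, ContDiff ℝ (⊤ : ℕ∞) (W κ))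
    (γ : Fin k → E → E →L[ℝ] ℝ)
    (hγ : ∀ κ q, γ κ q = fderiv ℝ (W κ) q - W κ q • ϑ q)
    (Γ : E → kCot E k) (hΓ : ∀ q, Γ q = (q, fun κ => γ κ q)) :
    (∀ (κ : Fin k) q u v,
      extDer1 (fun y w => γ κ y w) q u v
        - wedge11 (fun y w => ϑ y w) (fun y w => γ κ y w) q u v = 0) ∧
    (∀ q, kPerp (fun κ : Fin k => lcksForm ϑ κ) (Γ q)
        (Set.range (fderiv ℝ Γ q)) = Set.range (fderiv ℝ Γ q)) := by
  -- smoothness facts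
  have hWd : ∀ κ, Differentiable ℝ (W κ) := fun κ => (hW κ).differentiable (by simp)
  have hW' : ∀ κ, ContDiff ℝ (⊤ : ℕ∞) (fderiv ℝ (W κ)) := fun κ =>
    (hW κ).fderiv_right (m := (⊤ : ℕ∞)) (by exact_mod_cast le_rfl)
  have hγeq : ∀ κ, γ κ = fun q => fderiv ℝ (W κ) q - W κ q • ϑ q := fun κ => funext (hγ κ)
  have hγs : ∀ κ, ContDiff ℝ (⊤ : ℕ∞) (γ κ) := by
    intro κ
    rw [hγeq κ]
    exact (hW' κ).sub ((hW κ).smul hϑs)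
  have hγd : ∀ κ q, DifferentiableAt ℝ (γ κ) q := fun κ q =>
    ((hγs κ).differentiable (by simp) q)
  have hϑd : ∀ q, DifferentiableAt ℝ ϑ q := fun q => (hϑs.differentiable (by simp) q)
  -- symmetry of the second derivative of `W κ`
  have hWsym : ∀ κ q u v, fderiv ℝ (fderiv ℝ (W κ)) q u v
      = fderiv ℝ (fderiv ℝ (W κ)) q v u := by
    intro κ q u v
    exact second_derivative_symmetric (fun y => (hWd κ y).hasFDerivAt)
      ((hW' κ).differentiable (by simp) q).hasFDerivAt u v
  -- symmetry of the derivative of `ϑ` (closedness)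
  have hϑsym : ∀ q u v, fderiv ℝ ϑ q u v = fderiv ℝ ϑ q v u := by
    intro q u v
    have h := hϑc q u v
    simp only [extDer1, sub_eq_zero] at h
    rw [fderiv_apply_const_aux (hϑd q) v u, fderiv_apply_const_aux (hϑd q) u v] at h
    exact h
  -- the derivative of `γ κ`, evaluated
  have hγder : ∀ κ q u v, fderiv ℝ (γ κ) q u v
      = fderiv ℝ (fderiv ℝ (W κ)) q u v
        - (W κ q * fderiv ℝ ϑ q u v + fderiv ℝ (W κ) q u * ϑ q v) := by
    intro κ q u v
    rw [hγeq κ]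
    rw [fderiv_fun_sub ((hW' κ).differentiable (by simp) q)
      (((hW κ).differentiable (by simp) q).fun_smul (hϑd q))]
    rw [fderiv_fun_smul (hWd κ q) (hϑd q)]
    simp [mul_comm]
  -- the key antisymmetry identity
  have hkey : ∀ κ q u v, fderiv ℝ (γ κ) q u v - fderiv ℝ (γ κ) q v u
      = ϑ q u * γ κ q v - ϑ q v * γ κ q u := by
    intro κ q u v
    rw [hγder κ q u v, hγder κ q v u, hγ κ q, hWsym κ q u v, hϑsym q u v]
    simp only [ContinuousLinearMap.sub_apply, ContinuousLinearMap.smul_apply,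
      smul_eq_mul]
    ring
  -- Part 1
  have part1 : ∀ (κ : Fin k) q u v,
      extDer1 (fun y w => γ κ y w) q u v
        - wedge11 (fun y w => ϑ y w) (fun y w => γ κ y w) q u v = 0 := by
    intro κ q u v
    have h1 : extDer1 (fun y w => γ κ y w) q u v
        = fderiv ℝ (γ κ) q u v - fderiv ℝ (γ κ) q v u := by
      simp only [extDer1]
      rw [fderiv_apply_const_aux (hγd κ q) v u, fderiv_apply_const_aux (hγd κ q) u v]
    rw [h1, hkey κ q u v]
    simp only [wedge11]
    ring
  refine ⟨part1, ?_⟩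
  -- Part 2
  intro q
  have hΓeq : Γ = fun q => (q, fun κ => γ κ q) := funext hΓ
  set L : E →L[ℝ] kCot E k :=
    (ContinuousLinearMap.id ℝ E).prod
      (ContinuousLinearMap.pi fun κ => fderiv ℝ (γ κ) q) with hLdef
  have hL : HasFDerivAt Γ L q := by
    rw [hΓeq]
    exact HasFDerivAt.prodMk (hasFDerivAt_id q)
      (hasFDerivAt_pi.2 fun κ => (hγd κ q).hasFDerivAt)
  have hfΓ : fderiv ℝ Γ q = L := hL.fderiv
  have hLapp : ∀ a : E, L a = (a, fun κ => fderiv ℝ (γ κ) q a) := fun a => rfl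
  -- evaluation of the lcks-forms at a point of the section
  have hΩ : ∀ (κ : Fin k) (u v : kCot E k),
      lcksForm ϑ κ (Γ q) u v
        = v.2 κ u.1 - u.2 κ v.1 + (ϑ q u.1 * γ κ q v.1 - ϑ q v.1 * γ κ q u.1) := by
    intro κ u v
    simp only [lcksForm, lcsForm, canSymp, kproj, hΓ q, taut]
    rw [taut_extDer1]
    ring
  rw [hfΓ]
  ext v
  simp only [kPerp, Set.mem_setOf_eq, Set.mem_range]
  constructor
  · intro h
    refine ⟨v.1, ?_⟩
    rw [hLapp v.1]
    refine Prod.ext rfl ?_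
    funext κ
    refine (ContinuousLinearMap.ext fun b => ?_)
    have h1 := h (L b) ⟨b, rfl⟩ κ
    rw [hΩ κ v (L b), hLapp b] at h1
    simp only at h1
    have h2 := hkey κ q b v.1
    simp only at h2 ⊢
    linarith
  · rintro ⟨a, rfl⟩ w ⟨b, rfl⟩ κ
    rw [hΩ κ (L a) (L b), hLapp a, hLapp b]
    simp only
    have h2 := hkey κ q a b
    linarith
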